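/- Let n, r, s be integers with n ≥ 2r+1, r ≥ 0, s ≥ 1, and let g ≥ 1 be a real number such that Λ_{n,r,s}(τ) > 0 for every real τ > g. Then e_{n,r,s} ≤ g; that is, inf{ t/m : t, m integers with t ≥ m ≥ 1 and P_{n,r,s,m}(t) > 0 } ≤ g. -/

import Mathlib

set_option maxHeartbeats 1000000


/-- `Λ_{n,r,s}(τ) = (1/n!)·(τ^n − s·Σ_{j=0}^r C(n,j)·(τ−1)^j)`. -/
noncomputable def Lam (n r s : ℕ) (τ : ℝ) : ℝ :=
  (1 / (Nat.factorial n : ℝ)) *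
    (τ ^ n - (s : ℝ) * ∑ j ∈ Finset.range (r + 1), (Nat.choose n j : ℝ) * (τ - 1) ^ j)

/-- `P_{n,r,s,m}(t) = C(t+n, n) − s·Σ_{i=0}^{m−1} C(t−i+r, r)·C(i+n−r−1, n−r−1)`. -/
def Ppoly (n r s m t : ℕ) : ℤ :=
  (Nat.choose (t + n) n : ℤ) -
    (s : ℤ) * ∑ i ∈ Finset.range m,
      (Nat.choose (t - i + r) r : ℤ) * (Nat.choose (i + n - r - 1) (n - r - 1) : ℤ)

open Finset

lemma hockey (N b : ℕ) : ∑ i ∈ range N, (i + b).choose b = (N + b).choose (b + 1) := by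
  induction N with
  | zero => simp [Nat.choose_eq_zero_of_lt]
  | succ N ih =>
      rw [Finset.sum_range_succ, ih]
      have h : N + 1 + b = (N + b) + 1 := by omega
      rw [h, Nat.choose_succ_succ' (N + b) b]
      omega

lemma vand3 : ∀ (b N a : ℕ),
    ∑ i ∈ range (N + 1), (i + a).choose a * ((N - i) + b).choose b
      = (N + a + b + 1).choose (a + b + 1) := by
  intro b
  induction b with
  | zero =>
      intro N a
      simp only [Nat.add_zero, Nat.choose_zero_right, Nat.mul_one]
      rw [hockey (N + 1) a]
      congr 1
      omega
  | succ b ihb =>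
      intro N
      induction N with
      | zero => intro a; simp
      | succ N ihN =>
          intro a
          rw [Finset.sum_range_succ]
          have hlast : (N + 1 + a).choose a * ((N + 1 - (N + 1)) + (b + 1)).choose (b + 1)
              = (N + 1 + a).choose a := by simp
          rw [hlast]
          have hsplit : ∀ i ∈ range (N + 1),
              (i + a).choose a * ((N + 1 - i) + (b + 1)).choose (b + 1)
              = (i + a).choose a * ((N - i) + (b + 1)).choose (b + 1)
                + (i + a).choose a * ((N + 1 - i) + b).choose b := by
            intro i hi
            rw [Finset.mem_range] at hi
            have hc : N + 1 - i = N - i + 1 := by omega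
            rw [hc]
            have h1 : N - i + 1 + (b + 1) = (N - i + (b + 1)) + 1 := by omega
            rw [h1, Nat.choose_succ_succ' (N - i + (b + 1)) b, Nat.mul_add]
            have h2 : N - i + (b + 1) = N - i + 1 + b := by omega
            rw [h2]
            omega
          rw [Finset.sum_congr rfl hsplit, Finset.sum_add_distrib, ihN a]
          have hB' : ∑ i ∈ range (N + 1), (i + a).choose a * ((N + 1 - i) + b).choose b
                + (N + 1 + a).choose a
              = (N + 1 + a + b + 1).choose (a + b + 1) := by
            have h := ihb (N + 1) a
            rw [Finset.sum_range_succ] at h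
            simpa using h
          rw [add_assoc, hB']
          have e1 : N + 1 + a + (b + 1) + 1 = (N + a + (b + 1) + 1) + 1 := by omega
          have e2 : a + (b + 1) + 1 = (a + b + 1) + 1 := by omega
          rw [e1, e2, Nat.choose_succ_succ' (N + a + (b + 1) + 1) (a + b + 1)]
          have e3 : N + 1 + a + b + 1 = N + a + (b + 1) + 1 := by omega
          rw [e3]
          omega

lemma Uj_le (n r m j : ℕ) (hr : r + 1 ≤ n) (hj : j ≤ r) :
    ∑ i ∈ range m, (m - i + r).choose (r - j) * (i + (n - r - 1)).choose (n - r - 1)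
      ≤ (m + n).choose (n - j) := by
  have hv := vand3 (r - j) (m + j) (n - r - 1)
  have harg1 : m + j + (n - r - 1) + (r - j) + 1 = m + n := by omega
  have harg2 : (n - r - 1) + (r - j) + 1 = n - j := by omega
  rw [harg1, harg2] at hv
  rw [← hv]
  have hEq : ∀ i ∈ range m,
      (m - i + r).choose (r - j) * (i + (n - r - 1)).choose (n - r - 1)
      = (i + (n - r - 1)).choose (n - r - 1) * ((m + j - i) + (r - j)).choose (r - j) := by
    intro i hi
    rw [Finset.mem_range] at hi
    have : m + j - i + (r - j) = m - i + r := by omega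
    rw [this, Nat.mul_comm]
  rw [Finset.sum_congr rfl hEq]
  exact Finset.sum_le_sum_of_subset (Finset.range_subset_range.2 (by omega))

lemma S_expand (n r t m : ℕ) (hm : m ≤ t) :
    ∑ i ∈ range m, (t - i + r).choose r * (i + (n - r - 1)).choose (n - r - 1)
      = ∑ j ∈ range (r + 1), (t - m).choose j *
          ∑ i ∈ range m, (m - i + r).choose (r - j) * (i + (n - r - 1)).choose (n - r - 1) := by
  have hterm : ∀ i ∈ range m,
      (t - i + r).choose r * (i + (n - r - 1)).choose (n - r - 1)
      = ∑ j ∈ range (r + 1), (t - m).choose j *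
          ((m - i + r).choose (r - j) * (i + (n - r - 1)).choose (n - r - 1)) := by
    intro i hi
    rw [Finset.mem_range] at hi
    have h1 : t - i + r = (t - m) + (m - i + r) := by omega
    rw [h1, Nat.add_choose_eq, Finset.Nat.sum_antidiagonal_eq_sum_range_succ_mk,
      Finset.sum_mul]
    exact Finset.sum_congr rfl fun j _ => by ring
  rw [Finset.sum_congr rfl hterm, Finset.sum_comm]
  exact Finset.sum_congr rfl fun j _ => by rw [Finset.mul_sum]

lemma factS (n A B j : ℕ) (hj : j ≤ n) :
    n.factorial * (A.choose j * B.choose (n - j)) ≤ n.choose j * (A ^ j * B ^ (n - j)) := by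
  rw [← Nat.choose_mul_factorial_mul_factorial hj]
  calc n.choose j * j.factorial * (n - j).factorial * (A.choose j * B.choose (n - j))
      = n.choose j * ((j.factorial * A.choose j) * ((n - j).factorial * B.choose (n - j))) := by
        ring
    _ ≤ n.choose j * (A ^ j * B ^ (n - j)) := by
        apply Nat.mul_le_mul_left
        apply Nat.mul_le_mul
        · rw [← Nat.descFactorial_eq_factorial_mul_choose]
          exact Nat.descFactorial_le_pow _ _
        · rw [← Nat.descFactorial_eq_factorial_mul_choose]
          exact Nat.descFactorial_le_pow _ _

lemma S_le (n r t m : ℕ) (hr : r + 1 ≤ n) (hm : m ≤ t) :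
    n.factorial * ∑ i ∈ range m, (t - i + r).choose r * (i + (n - r - 1)).choose (n - r - 1)
      ≤ ∑ j ∈ range (r + 1), n.choose j * ((t - m) ^ j * (m + n) ^ (n - j)) := by
  rw [S_expand n r t m hm, Finset.mul_sum]
  apply Finset.sum_le_sum
  intro j hj
  rw [Finset.mem_range] at hj
  calc n.factorial * ((t - m).choose j * ∑ i ∈ range m,
        (m - i + r).choose (r - j) * (i + (n - r - 1)).choose (n - r - 1))
      ≤ n.factorial * ((t - m).choose j * (m + n).choose (n - j)) := by
        apply Nat.mul_le_mul_left
        exact Nat.mul_le_mul_left _ (Uj_le n r m j hr (by omega))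
    _ ≤ n.choose j * ((t - m) ^ j * (m + n) ^ (n - j)) := factS n _ _ j (by omega)

lemma choose_lower (t n : ℕ) : t ^ n ≤ n.factorial * (t + n).choose n := by
  calc t ^ n ≤ (t + 1) ^ n := Nat.pow_le_pow_left (by omega) n
    _ ≤ (t + 1).ascFactorial n := Nat.pow_succ_le_ascFactorial (t + 1) n
    _ = n.factorial * (t + n).choose n := Nat.ascFactorial_eq_factorial_mul_choose t n

lemma pow_sub_pow_le (x y : ℤ) (n : ℕ) (hy : 0 ≤ y) (hxy : y ≤ x) (hd : x - y = n) :
    x ^ n - y ^ n ≤ (n : ℤ) * ((n : ℤ) * x ^ (n - 1)) := by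
  have hx0 : 0 ≤ x := le_trans hy hxy
  have hgs := geom_sum₂_mul x y n
  rw [hd] at hgs
  have hsum : (∑ i ∈ Finset.range n, x ^ i * y ^ (n - 1 - i)) ≤ (n : ℤ) * x ^ (n - 1) := by
    calc (∑ i ∈ Finset.range n, x ^ i * y ^ (n - 1 - i))
        ≤ ∑ _i ∈ Finset.range n, x ^ (n - 1) := by
          apply Finset.sum_le_sum
          intro i hi
          rw [Finset.mem_range] at hi
          calc x ^ i * y ^ (n - 1 - i) ≤ x ^ i * x ^ (n - 1 - i) := by
                apply mul_le_mul_of_nonneg_left (pow_le_pow_left₀ hy hxy _) (pow_nonneg hx0 i)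
            _ = x ^ (n - 1) := by rw [← pow_add]; congr 1; omega
      _ = (n : ℤ) * x ^ (n - 1) := by rw [Finset.sum_const, Finset.card_range]; ring
  have hn0 : (0 : ℤ) ≤ (n : ℤ) := Int.natCast_nonneg n
  have := mul_le_mul_of_nonneg_right hsum hn0
  nlinarith [this, hgs]

lemma Ppoly_pos (n r s p q K : ℕ) (hr : r + 1 ≤ n) (hq : 1 ≤ q) (hpq : q < p)
    (hK : n + 1 ≤ K)
    (hA : (n : ℤ) * n * (p : ℤ) ^ (n - 1)
        < ((p : ℤ) ^ n - (s : ℤ) * ∑ j ∈ range (r + 1),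
            (n.choose j : ℤ) * ((p : ℤ) - q) ^ j * (q : ℤ) ^ (n - j)) * K) :
    0 < Ppoly n r s (q * K - n) (p * K - n) := by
  set t := p * K - n with htdef
  set m := q * K - n with hmdef
  have hqK : n + 1 ≤ q * K := le_trans hK (Nat.le_mul_of_pos_left K hq)
  have hpK : q * K ≤ p * K := Nat.mul_le_mul_right K (le_of_lt hpq)
  have htn : t + n = p * K := by omega
  have hmn : m + n = q * K := by omega
  have hmt : m ≤ t := by omega
  have htm : t - m = (p - q) * K := by rw [Nat.sub_mul]; omega
  set S : ℕ := ∑ i ∈ range m, (t - i + r).choose r * (i + (n - r - 1)).choose (n - r - 1)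
    with hSdef
  have hPeq : Ppoly n r s m t = ((t + n).choose n : ℤ) - (s : ℤ) * (S : ℤ) := by
    unfold Ppoly
    congr 1
    congr 1
    rw [hSdef, Nat.cast_sum]
    apply Finset.sum_congr rfl
    intro i _
    have hidx : i + n - r - 1 = i + (n - r - 1) := by omega
    rw [hidx]
    push_cast
    ring
  have h1 : (t : ℤ) ^ n ≤ (n.factorial : ℤ) * ((t + n).choose n : ℤ) := by
    exact_mod_cast choose_lower t n
  have h2 : (n.factorial : ℤ) * (S : ℤ)
      ≤ ∑ j ∈ range (r + 1), (n.choose j : ℤ) * (((t - m : ℕ) : ℤ) ^ j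
          * (((m + n : ℕ) : ℤ)) ^ (n - j)) := by
    exact_mod_cast S_le n r t m hr hmt
  have hcast_tm : ((t - m : ℕ) : ℤ) = ((p : ℤ) - q) * K := by
    rw [htm, Nat.cast_mul, Nat.cast_sub (le_of_lt hpq)]
  have hcast_mn : ((m + n : ℕ) : ℤ) = (q : ℤ) * K := by rw [hmn]; push_cast; ring
  have h3 : ∑ j ∈ range (r + 1), (n.choose j : ℤ) * (((t - m : ℕ) : ℤ) ^ j
          * (((m + n : ℕ) : ℤ)) ^ (n - j))
      = (∑ j ∈ range (r + 1),
          (n.choose j : ℤ) * ((p : ℤ) - q) ^ j * (q : ℤ) ^ (n - j)) * (K : ℤ) ^ n := by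
    rw [Finset.sum_mul]
    apply Finset.sum_congr rfl
    intro j hj
    rw [Finset.mem_range] at hj
    rw [hcast_tm, hcast_mn, mul_pow, mul_pow]
    have hKK : (K : ℤ) ^ j * (K : ℤ) ^ (n - j) = (K : ℤ) ^ n := by
      rw [← pow_add]; congr 1; omega
    rw [← hKK]; ring
  have hnpK : n ≤ p * K := by omega
  have hcast_t : (t : ℤ) = (p : ℤ) * K - n := by
    rw [htdef, Nat.cast_sub hnpK]; push_cast; ring
  have hfactP : (n.factorial : ℤ) * Ppoly n r s m t
      ≥ (t : ℤ) ^ n - (s : ℤ) * ((∑ j ∈ range (r + 1),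
          (n.choose j : ℤ) * ((p : ℤ) - q) ^ j * (q : ℤ) ^ (n - j)) * (K : ℤ) ^ n) := by
    rw [hPeq, mul_sub, ← h3]
    have hs0 : (0 : ℤ) ≤ (s : ℤ) := Int.natCast_nonneg s
    have h2' := mul_le_mul_of_nonneg_left h2 hs0
    have heq : (n.factorial : ℤ) * ((s : ℤ) * (S : ℤ)) = (s : ℤ) * ((n.factorial : ℤ) * S) := by
      ring
    rw [heq]
    linarith [h1, h2']
  set D : ℤ := ∑ j ∈ range (r + 1), (n.choose j : ℤ) * ((p : ℤ) - q) ^ j * (q : ℤ) ^ (n - j)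
    with hDdef
  set A : ℤ := (p : ℤ) ^ n - (s : ℤ) * D with hAdef
  have hnpK' : (n : ℤ) + 1 ≤ (p : ℤ) * K := by exact_mod_cast (by omega : n + 1 ≤ p * K)
  have hx : ((p : ℤ) * K) ^ n - ((p : ℤ) * K - n) ^ n
      ≤ (n : ℤ) * ((n : ℤ) * ((p : ℤ) * K) ^ (n - 1)) := by
    apply pow_sub_pow_le
    · linarith
    · have h0n : (0 : ℤ) ≤ (n : ℤ) := Int.natCast_nonneg n
      linarith
    · ring
  have hKpos : (0 : ℤ) < (K : ℤ) := by exact_mod_cast (by omega : 0 < K)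
  have hKn1 : (0 : ℤ) < (K : ℤ) ^ (n - 1) := by positivity
  have hrw1 : (t : ℤ) ^ n - (s : ℤ) * (D * (K : ℤ) ^ n)
      = A * (K : ℤ) ^ n - (((p : ℤ) * K) ^ n - ((p : ℤ) * K - n) ^ n) := by
    rw [hcast_t, hAdef]; ring
  have hpow : (K : ℤ) ^ n = (K : ℤ) * (K : ℤ) ^ (n - 1) := by
    rw [← pow_succ']; congr 1; omega
  have hfinal : (0 : ℤ) < A * (K : ℤ) ^ n - (n : ℤ) * ((n : ℤ) * ((p : ℤ) * K) ^ (n - 1)) := by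
    rw [hpow, mul_pow]
    have hre : A * ((K : ℤ) * (K : ℤ) ^ (n - 1))
          - (n : ℤ) * ((n : ℤ) * ((p : ℤ) ^ (n - 1) * (K : ℤ) ^ (n - 1)))
        = (A * K - (n : ℤ) * n * (p : ℤ) ^ (n - 1)) * (K : ℤ) ^ (n - 1) := by ring
    rw [hre]
    apply mul_pos _ hKn1
    linarith [hA]
  have hPpos : (0 : ℤ) < (n.factorial : ℤ) * Ppoly n r s m t := by
    calc (0 : ℤ) < A * (K : ℤ) ^ n - (n : ℤ) * ((n : ℤ) * ((p : ℤ) * K) ^ (n - 1)) := hfinal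
      _ ≤ A * (K : ℤ) ^ n - (((p : ℤ) * K) ^ n - ((p : ℤ) * K - n) ^ n) := by linarith [hx]
      _ = (t : ℤ) ^ n - (s : ℤ) * (D * (K : ℤ) ^ n) := by rw [hrw1]
      _ ≤ (n.factorial : ℤ) * Ppoly n r s m t := by linarith [hfactP]
  have hfac : (0 : ℤ) < (n.factorial : ℤ) := by exact_mod_cast Nat.factorial_pos n
  by_contra hcon
  push_neg at hcon
  have := mul_nonpos_of_nonneg_of_nonpos (le_of_lt hfac) hcon
  linarith


/-- If `g ≥ 1` is real with `Λ_{n,r,s}(τ) > 0` for every real `τ > g`, then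
`e_{n,r,s} = inf{ t/m : t ≥ m ≥ 1, P_{n,r,s,m}(t) > 0 } ≤ g`. -/
theorem stmt_8 (n r s : ℕ) (hn : 2 * r + 1 ≤ n) (hs : 1 ≤ s)
    (g : ℝ) (hg1 : 1 ≤ g) (hg : ∀ τ : ℝ, g < τ → 0 < Lam n r s τ) :
    sInf {x : ℝ | ∃ t m : ℕ, 1 ≤ m ∧ m ≤ t ∧ 0 < Ppoly n r s m t ∧ x = (t : ℝ) / (m : ℝ)}
      ≤ g := by
  set E := {x : ℝ | ∃ t m : ℕ, 1 ≤ m ∧ m ≤ t ∧ 0 < Ppoly n r s m t ∧ x = (t : ℝ) / (m : ℝ)}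
    with hEdef
  have hbdd : BddBelow E := by
    refine ⟨0, fun x hx => ?_⟩
    obtain ⟨t, m, hm, hmt, hP, rfl⟩ := hx
    positivity
  apply le_of_forall_gt_imp_ge_of_dense
  intro c hc
  set ε : ℝ := c - g with hεdef
  have hε : 0 < ε := by linarith
  obtain ⟨ξ, hgξ, hξc⟩ := exists_rat_btwn (show g < g + ε / 2 by linarith)
  set q : ℕ := ξ.den with hqdef
  set p : ℕ := ξ.num.toNat with hpdef
  have hq1 : 1 ≤ q := ξ.pos
  have hqR : (0 : ℝ) < q := by exact_mod_cast hq1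
  have hξ1 : (1 : ℝ) < (ξ : ℝ) := lt_of_le_of_lt hg1 hgξ
  have hnum : (0 : ℤ) ≤ ξ.num := by
    have : (0 : ℚ) < ξ := by
      have : (0 : ℝ) < (ξ : ℝ) := by linarith
      exact_mod_cast this
    exact le_of_lt (Rat.num_pos.2 this)
  have hpcast : ((p : ℕ) : ℝ) = (ξ.num : ℝ) := by
    rw [hpdef]
    exact_mod_cast congrArg (Int.cast : ℤ → ℝ) (Int.toNat_of_nonneg hnum)
  have hξval : ((p : ℕ) : ℝ) / ((q : ℕ) : ℝ) = (ξ : ℝ) := by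
    rw [hpcast, hqdef, Rat.cast_def]
  have hpq : q < p := by
    have hr : ((q : ℕ) : ℝ) < ((p : ℕ) : ℝ) := by
      exact (one_lt_div hqR).1 (show 1 < ((p : ℕ) : ℝ) / q by rw [hξval]; exact hξ1)
    exact_mod_cast hr
  have hrn : r + 1 ≤ n := by omega
  have hΛ : 0 < Lam n r s (((p : ℕ) : ℝ) / q) := by
    rw [hξval]; exact hg _ hgξ
  -- the integer A
  set D : ℤ := ∑ j ∈ range (r + 1), (n.choose j : ℤ) * ((p : ℤ) - q) ^ j * (q : ℤ) ^ (n - j)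
    with hDdef
  set A : ℤ := (p : ℤ) ^ n - (s : ℤ) * D with hAdef
  have hAreal : (A : ℝ)
      = (n.factorial : ℝ) * (q : ℝ) ^ n * Lam n r s (((p : ℕ) : ℝ) / q) := by
    rw [hAdef, hDdef]
    unfold Lam
    have hfne : (n.factorial : ℝ) ≠ 0 := by positivity
    rw [show (n.factorial : ℝ) * (q : ℝ) ^ n * ((1 / (n.factorial : ℝ)) *
        ((((p : ℕ) : ℝ) / q) ^ n - (s : ℝ) * ∑ j ∈ Finset.range (r + 1),
          (Nat.choose n j : ℝ) * ((((p : ℕ) : ℝ) / q) - 1) ^ j))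
      = (q : ℝ) ^ n * ((((p : ℕ) : ℝ) / q) ^ n - (s : ℝ) * ∑ j ∈ Finset.range (r + 1),
          (Nat.choose n j : ℝ) * ((((p : ℕ) : ℝ) / q) - 1) ^ j) from by
        field_simp]
    rw [mul_sub]
    have e1 : (q : ℝ) ^ n * (((p : ℕ) : ℝ) / q) ^ n = ((p : ℕ) : ℝ) ^ n := by
      rw [div_pow]
      field_simp
    have e2 : (q : ℝ) ^ n * ((s : ℝ) * ∑ j ∈ Finset.range (r + 1),
          (Nat.choose n j : ℝ) * ((((p : ℕ) : ℝ) / q) - 1) ^ j)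
        = (s : ℝ) * ∑ j ∈ Finset.range (r + 1),
            (Nat.choose n j : ℝ) * (((p : ℕ) : ℝ) - q) ^ j * (q : ℝ) ^ (n - j) := by
      rw [mul_comm ((q : ℝ) ^ n), mul_assoc, Finset.sum_mul]
      congr 1
      apply Finset.sum_congr rfl
      intro j hj
      rw [Finset.mem_range] at hj
      have hj' : j ≤ n := by omega
      have e3 : ((((p : ℕ) : ℝ) / q) - 1) ^ j = (((p : ℕ) : ℝ) - q) ^ j / (q : ℝ) ^ j := by
        rw [← div_pow]
        congr 1
        field_simp
      rw [e3]
      rw [show (q : ℝ) ^ n = (q : ℝ) ^ j * (q : ℝ) ^ (n - j) from by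
        rw [← pow_add]; congr 1; omega]
      field_simp
    rw [e1, e2]
    push_cast
    ring
  have hApos : 0 < A := by
    have h0 : (0 : ℝ) < (A : ℝ) := by
      rw [hAreal]
      have h1 : (0 : ℝ) < (n.factorial : ℝ) := by positivity
      have h2 : (0 : ℝ) < (q : ℝ) ^ n := by positivity
      exact mul_pos (mul_pos h1 h2) hΛ
    exact_mod_cast h0
  -- choose K
  obtain ⟨K, hKgt⟩ := exists_nat_gt
    (max (max ((n : ℝ) + 1) ((n : ℝ) * n * (p : ℝ) ^ (n - 1)))
      ((n : ℝ) + 2 * n * ((p : ℝ) - q) / ε))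
  have hK1 : (n : ℝ) + 1 < K := lt_of_le_of_lt (le_trans (le_max_left _ _) (le_max_left _ _)) hKgt
  have hK2 : (n : ℝ) * n * (p : ℝ) ^ (n - 1) < K :=
    lt_of_le_of_lt (le_trans (le_max_right _ _) (le_max_left _ _)) hKgt
  have hK3 : (n : ℝ) + 2 * n * ((p : ℝ) - q) / ε < K :=
    lt_of_le_of_lt (le_max_right _ _) hKgt
  have hK : n + 1 ≤ K := by exact_mod_cast le_of_lt (by exact_mod_cast hK1 : ((n + 1 : ℕ) : ℝ) < K)
  have hAineq : (n : ℤ) * n * (p : ℤ) ^ (n - 1) < A * K := by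
    have hKZ : (n : ℤ) * n * (p : ℤ) ^ (n - 1) < (K : ℤ) := by exact_mod_cast hK2
    have hK0 : (0 : ℤ) ≤ (K : ℤ) := Int.natCast_nonneg K
    nlinarith [hApos, hKZ, hK0]
  have hP := Ppoly_pos n r s p q K hrn hq1 hpq hK (by rw [← hDdef, ← hAdef]; exact hAineq)
  set t : ℕ := p * K - n with htdef
  set m : ℕ := q * K - n with hmdef
  have hqK : n + 1 ≤ q * K := le_trans hK (Nat.le_mul_of_pos_left K hq1)
  have hpKn : n + 1 ≤ p * K := le_trans hqK (Nat.mul_le_mul_right K (le_of_lt hpq))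
  have hm1 : 1 ≤ m := by omega
  have hmt : m ≤ t := by
    have : q * K ≤ p * K := Nat.mul_le_mul_right K (le_of_lt hpq)
    omega
  have hmem : ((t : ℝ) / (m : ℝ)) ∈ E := ⟨t, m, hm1, hmt, hP, rfl⟩
  have hsinf : sInf E ≤ (t : ℝ) / (m : ℝ) := csInf_le hbdd hmem
  -- bound t/m
  have htR : (t : ℝ) = (p : ℝ) * K - n := by
    rw [htdef]
    push_cast [Nat.cast_sub (by omega : n ≤ p * K)]
    ring
  have hmR : (m : ℝ) = (q : ℝ) * K - n := by
    rw [hmdef]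
    push_cast [Nat.cast_sub (by omega : n ≤ q * K)]
    ring
  have hmpos : (0 : ℝ) < (m : ℝ) := by exact_mod_cast hm1
  have hKR : (0 : ℝ) < (K : ℝ) := by
    have : (0 : ℝ) ≤ (n : ℝ) := by positivity
    linarith
  have hpqR : (0 : ℝ) ≤ (p : ℝ) - q := by
    have : ((q : ℕ) : ℝ) ≤ ((p : ℕ) : ℝ) := by exact_mod_cast le_of_lt hpq
    linarith
  have hxval : (t : ℝ) / m = (p : ℝ) / q + (n : ℝ) * ((p : ℝ) - q) / ((q : ℝ) * m) := by
    rw [htR]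
    rw [div_add_div _ _ (ne_of_gt hqR) (ne_of_gt (mul_pos hqR hmpos))]
    rw [div_eq_div_iff (ne_of_gt hmpos) (ne_of_gt (mul_pos hqR (mul_pos hqR hmpos)))]
    rw [hmR]
    ring
  have hbound : (n : ℝ) * ((p : ℝ) - q) / ((q : ℝ) * m) ≤ ε / 2 := by
    have hqm : (K : ℝ) - n ≤ (q : ℝ) * m := by
      rw [hmR]
      have hq1R : (1 : ℝ) ≤ (q : ℝ) := by exact_mod_cast hq1
      have hKn : (0 : ℝ) ≤ (q : ℝ) * K - n := by nlinarith
      nlinarith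
    have hKn2 : 2 * (n : ℝ) * ((p : ℝ) - q) / ε < (K : ℝ) - n := by
      have : 2 * (n : ℝ) * ((p : ℝ) - q) / ε = 2 * ((n : ℝ) * ((p : ℝ) - q)) / ε := by ring
      linarith [hK3]
    have hqmpos : (0 : ℝ) < (q : ℝ) * m := mul_pos hqR hmpos
    rw [div_le_iff₀ hqmpos]
    have h1 : (n : ℝ) * ((p : ℝ) - q) < ε / 2 * ((K : ℝ) - n) := by
      have := (div_lt_iff₀ hε).1 hKn2
      nlinarith
    nlinarith [hqm, hε]
  have hfin : (t : ℝ) / m ≤ c := by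
    rw [hxval]
    have : ((p : ℕ) : ℝ) / q < g + ε / 2 := by rw [hξval]; exact hξc
    linarith
  linarith [hsinf, hfin]
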